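/- Every poset of height 2 is convex: if P is a finite poset in which every chain has at most 2 elements, then there is a family of compact convex sets, each spanned between two fixed horizontal lines (intersecting both lines), in bijection with the elements of P, such that two sets intersect if and only if the corresponding elements are incomparable in P, and when the sets of x and y are disjoint, x < y in P iff the set of x lies entirely left of the set of y. -/

import Mathlib

open Set

/-- The closed strip between the two horizontal lines y = 0 and y = 1. -/
def Strip : Set (ℝ × ℝ) := {p | 0 ≤ p.2 ∧ p.2 ≤ 1}

namespace Stmt5Aux

lemma isLinearMap_aux (c : ℝ) : IsLinearMap ℝ (fun p : ℝ × ℝ => p.1 + c * p.2) := by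
  constructor
  · intro x y; simp [Prod.fst_add, Prod.snd_add]; ring
  · intro m x; simp [Prod.smul_fst, Prod.smul_snd, smul_eq_mul]; ring

lemma strip_convex : Convex ℝ Strip := by
  intro p hp q hq a b ha hb hab
  obtain ⟨hp0, hp1⟩ := hp
  obtain ⟨hq0, hq1⟩ := hq
  have h2 : (a • p + b • q).2 = a * p.2 + b * q.2 := rfl
  constructor
  · rw [h2]
    nlinarith [mul_nonneg ha hp0, mul_nonneg hb hq0]
  · rw [h2]
    nlinarith [mul_le_mul_of_nonneg_left hp1 ha, mul_le_mul_of_nonneg_left hq1 hb]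

/-- The segment for a maximal element with parameter `c`: the portion of the line
`x = c^2 - 2*c*y` within the strip. -/
def Seg (c : ℝ) : Set (ℝ × ℝ) := {p | p.1 = c ^ 2 - 2 * c * p.2 ∧ 0 ≤ p.2 ∧ p.2 ≤ 1}

lemma seg_eq_image (c : ℝ) :
    Seg c = (fun y : ℝ => (c ^ 2 - 2 * c * y, y)) '' Icc (0 : ℝ) 1 := by
  ext p
  constructor
  · rintro ⟨h1, h2, h3⟩
    exact ⟨p.2, ⟨h2, h3⟩, by simp [← h1]⟩
  · rintro ⟨y, ⟨hy0, hy1⟩, rfl⟩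
    exact ⟨rfl, hy0, hy1⟩

lemma seg_isCompact (c : ℝ) : IsCompact (Seg c) := by
  rw [seg_eq_image]
  exact isCompact_Icc.image (by continuity)

lemma seg_eq_inter (c : ℝ) :
    Seg c = {p : ℝ × ℝ | p.1 + (2 * c) * p.2 = c ^ 2} ∩ Strip := by
  ext p
  constructor
  · rintro ⟨h1, h2, h3⟩
    refine ⟨?_, h2, h3⟩
    show p.1 + (2 * c) * p.2 = c ^ 2
    rw [h1]; ring
  · rintro ⟨h1, h2, h3⟩
    have h1' : p.1 + (2 * c) * p.2 = c ^ 2 := h1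
    exact ⟨by linarith, h2, h3⟩

lemma arith1 (a : ℝ) : (-2 : ℝ) + (2 * a) * 0 < a ^ 2 := by nlinarith [sq_nonneg a]

lemma arith2 (a : ℝ) : (-2 : ℝ) + (2 * a) * 1 < a ^ 2 := by nlinarith [sq_nonneg (a - 1)]

lemma arith3 (a b : ℝ) (h : b ≠ a) : -b ^ 2 + (2 * a) * b < a ^ 2 := by
  have h0 : a - b ≠ 0 := sub_ne_zero.2 (Ne.symm h)
  have h1 : 0 < (a - b) ^ 2 := by positivity
  nlinarith

lemma arith4 (c p1 p2 : ℝ) (h : p1 + 2 * c * p2 < c ^ 2) : p1 < c ^ 2 - 2 * c * p2 := by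
  linarith

lemma half01 (a b : ℝ) (ha0 : 0 ≤ a) (ha1 : a ≤ 1) (hb0 : 0 ≤ b) (hb1 : b ≤ 1) :
    0 ≤ (a + b) / 2 ∧ (a + b) / 2 ≤ 1 := by constructor <;> linarith

lemma seg_convex (c : ℝ) : Convex ℝ (Seg c) := by
  rw [seg_eq_inter]
  exact (convex_hyperplane (isLinearMap_aux (2 * c)) (c ^ 2)).inter strip_convex

lemma seg_subset_strip (c : ℝ) : Seg c ⊆ Strip := fun p hp => ⟨hp.2.1, hp.2.2⟩

end Stmt5Aux

open Stmt5Aux in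
/-- Every poset of height 2 (no chain with 3 elements) is convex: there
is a family of compact convex sets, each spanned between the two lines, in bijection
with the elements, such that two sets intersect iff the corresponding elements are
incomparable, and for comparable elements x < y the set of x lies entirely to the left
of the set of y. -/
theorem stmt5 {P : Type*} [Fintype P] [PartialOrder P]
    (hheight : ∀ a b c : P, a < b → b < c → False) :
    ∃ C : P → Set (ℝ × ℝ),
      (∀ x, IsCompact (C x) ∧ Convex ℝ (C x) ∧ C x ⊆ Strip ∧
        (∃ p ∈ C x, p.2 = (0:ℝ)) ∧ (∃ p ∈ C x, p.2 = (1:ℝ))) ∧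
      (∀ x y : P, x ≠ y → ((C x ∩ C y).Nonempty ↔ ¬ x < y ∧ ¬ y < x)) ∧
      (∀ x y : P, x < y → Disjoint (C x) (C y) ∧
        ∀ p ∈ C x, ∀ q ∈ C y, p.2 = q.2 → p.1 < q.1) := by
  classical
  -- an injective parameter t : P → [0,1]
  set n := Fintype.card P with hn
  set t : P → ℝ := fun x => ((Fintype.equivFin P x : ℕ) : ℝ) / n with ht
  have hnpos : ∀ _ : P, (0 : ℝ) < n := fun x => by
    have : 0 < n := @Fintype.card_pos P _ ⟨x⟩
    exact_mod_cast this
  have ht0 : ∀ x, 0 ≤ t x := fun x => div_nonneg (Nat.cast_nonneg _) (hnpos x).le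
  have ht1 : ∀ x, t x ≤ 1 := fun x => by
    rw [ht]
    have hlt : ((Fintype.equivFin P x : ℕ) : ℝ) ≤ n := by
      exact_mod_cast (Fintype.equivFin P x).isLt.le
    exact div_le_one_of_le₀ hlt (hnpos x).le
  have htinj : Function.Injective t := by
    intro x y hxy
    have hn0 : (n : ℝ) ≠ 0 := (hnpos x).ne'
    have h1 : ((Fintype.equivFin P x : ℕ) : ℝ) = ((Fintype.equivFin P y : ℕ) : ℝ) := by
      have hxy2 : ((Fintype.equivFin P x : ℕ) : ℝ) / n = ((Fintype.equivFin P y : ℕ) : ℝ) / n := hxy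
      field_simp at hxy2
      exact_mod_cast hxy2
    have h2 : (Fintype.equivFin P x : ℕ) = (Fintype.equivFin P y : ℕ) := by exact_mod_cast h1
    exact (Fintype.equivFin P).injective (Fin.ext h2)
  -- maximal elements
  set Mx : P → Prop := fun x => ∃ z, z < x with hMx
  have hcomp : ∀ x y : P, x < y → ¬ Mx x ∧ Mx y := by
    intro x y h
    exact ⟨fun ⟨z, hz⟩ => hheight z x y hz h, ⟨x, h⟩⟩
  -- witness points
  set w : P → ℝ × ℝ := fun m => (-(t m) ^ 2, t m) with hw
  have hw_mem : ∀ m, w m ∈ Seg (t m) := by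
    intro m
    exact ⟨by simp [hw]; ring, ht0 m, ht1 m⟩
  -- generating sets for minimal elements
  set V : P → Set (ℝ × ℝ) := fun x =>
    insert ((-2 : ℝ), (0 : ℝ)) (insert ((-2 : ℝ), (1 : ℝ)) (w '' {m | Mx m ∧ ¬ x < m})) with hV
  set C : P → Set (ℝ × ℝ) := fun x => if Mx x then Seg (t x) else convexHull ℝ (V x) with hC
  have hCmax : ∀ x, Mx x → C x = Seg (t x) := fun x h => by simp [hC, h]
  have hCmin : ∀ x, ¬ Mx x → C x = convexHull ℝ (V x) := fun x h => by simp [hC, h]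
  -- generators in strip
  have hVstrip : ∀ x, V x ⊆ Strip := by
    intro x p hp
    rcases hp with rfl | rfl | ⟨m, _, rfl⟩
    · exact ⟨le_refl 0, zero_le_one⟩
    · exact ⟨zero_le_one, le_refl 1⟩
    · exact ⟨ht0 m, ht1 m⟩
  -- the key halfplane containment
  have hkey : ∀ x m : P, x < m → ∀ p ∈ C x, p.1 + (2 * t m) * p.2 < (t m) ^ 2 := by
    intro x m hxm
    obtain ⟨hxmin, hmmax⟩ := hcomp x m hxm
    rw [hCmin x hxmin]
    have hconv : Convex ℝ {p : ℝ × ℝ | p.1 + (2 * t m) * p.2 < (t m) ^ 2} :=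
      convex_halfSpace_lt (isLinearMap_aux (2 * t m)) _
    refine fun p hp => convexHull_min ?_ hconv hp
    intro q hq
    rcases hq with rfl | rfl | ⟨j, ⟨hjmax, hjx⟩, rfl⟩
    · exact arith1 (t m)
    · exact arith2 (t m)
    · show -(t j) ^ 2 + (2 * t m) * t j < (t m) ^ 2
      have hjm : j ≠ m := fun h => hjx (h ▸ hxm)
      exact arith3 (t m) (t j) (fun h => hjm (htinj h))
  -- part 3: order condition
  have hpart3 : ∀ x y : P, x < y → Disjoint (C x) (C y) ∧
      ∀ p ∈ C x, ∀ q ∈ C y, p.2 = q.2 → p.1 < q.1 := by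
    intro x y hxy
    obtain ⟨hxmin, hymax⟩ := hcomp x y hxy
    have hCy : C y = Seg (t y) := hCmax y hymax
    have hlt : ∀ p ∈ C x, ∀ q ∈ C y, p.2 = q.2 → p.1 < q.1 := by
      intro p hp q hq hpq
      rw [hCy] at hq
      have h1 := hkey x y hxy p hp
      have h2 : q.1 = (t y) ^ 2 - 2 * (t y) * q.2 := hq.1
      rw [h2, ← hpq]
      exact arith4 (t y) p.1 p.2 h1
    refine ⟨Set.disjoint_left.2 fun p hp hq => ?_, hlt⟩
    exact lt_irrefl p.1 (hlt p hp p hq rfl)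
  refine ⟨C, ?_, ?_, hpart3⟩
  · -- part 1: compact, convex, in strip, spanning
    intro x
    by_cases hx : Mx x
    · rw [hCmax x hx]
      refine ⟨seg_isCompact _, seg_convex _, seg_subset_strip _, ?_, ?_⟩
      · exact ⟨((t x) ^ 2 - 2 * (t x) * 0, 0), ⟨rfl, le_refl 0, zero_le_one⟩, rfl⟩
      · exact ⟨((t x) ^ 2 - 2 * (t x) * 1, 1), ⟨rfl, zero_le_one, le_refl 1⟩, rfl⟩
    · rw [hCmin x hx]
      have hfin : (V x).Finite := by
        apply Set.Finite.insert
        apply Set.Finite.insert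
        exact Set.Finite.image _ (Set.toFinite _)
      refine ⟨hfin.isCompact_convexHull (𝕜 := ℝ), convex_convexHull ℝ _,
        convexHull_min (hVstrip x) strip_convex, ?_, ?_⟩
      · exact ⟨(-2, 0), subset_convexHull ℝ _ (Or.inl rfl), rfl⟩
      · exact ⟨(-2, 1), subset_convexHull ℝ _ (Or.inr (Or.inl rfl)), rfl⟩
  · -- part 2: intersection iff incomparable
    intro x y hxy
    constructor
    · rintro ⟨p, hpx, hpy⟩
      constructor
      · intro h
        exact Set.disjoint_left.1 (hpart3 x y h).1 hpx hpy
      · intro h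
        exact Set.disjoint_left.1 (hpart3 y x h).1 hpy hpx
    · rintro ⟨hnxy, hnyx⟩
      by_cases hx : Mx x <;> by_cases hy : Mx y
      · -- both maximal: crossing point
        obtain ⟨hh0, hh1⟩ := half01 (t x) (t y) (ht0 x) (ht1 x) (ht0 y) (ht1 y)
        refine ⟨(-(t x) * (t y), (t x + t y) / 2), ?_, ?_⟩
        · rw [hCmax x hx]
          exact ⟨by show -(t x) * (t y) = (t x) ^ 2 - 2 * (t x) * ((t x + t y) / 2); ring,
            hh0, hh1⟩
        · rw [hCmax y hy]
          exact ⟨by show -(t x) * (t y) = (t y) ^ 2 - 2 * (t y) * ((t x + t y) / 2); ring,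
            hh0, hh1⟩
      · -- x maximal, y minimal: witness point of x
        refine ⟨w x, ?_, ?_⟩
        · rw [hCmax x hx]; exact hw_mem x
        · rw [hCmin y hy]
          exact subset_convexHull ℝ _ (Or.inr (Or.inr ⟨x, ⟨hx, hnyx⟩, rfl⟩))
      · -- y maximal, x minimal: witness point of y
        refine ⟨w y, ?_, ?_⟩
        · rw [hCmin x hx]
          exact subset_convexHull ℝ _ (Or.inr (Or.inr ⟨y, ⟨hy, hnxy⟩, rfl⟩))
        · rw [hCmax y hy]; exact hw_mem y
      · -- both minimal: far-left point
        refine ⟨(-2, 0), ?_, ?_⟩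
        · rw [hCmin x hx]; exact subset_convexHull ℝ _ (Or.inl rfl)
        · rw [hCmin y hy]; exact subset_convexHull ℝ _ (Or.inl rfl)
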